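/- Suppose g : ℕ → ℝ satisfies g(0) = g(1) = 1 and, for n ≥ 2, g(n) = 1 + Σ_{i=1}^{n-1} [(1-p)^{C(i,2)} - (1-p)^{C(i+1,2)}] g(n-i). Then the formal power series G(x) = Σ_{n≥0} g(n)x^n satisfies (G(x) - 1)(1 - A_p(x) + B_p(x)) = x/(1-x), and consequently G(x) = 1 + x/((1-x)^2 B_p(x)). -/

import Mathlib

/-- `A_p(x) = Σ_{n≥0} (1-p)^{C(n,2)} x^n` as a formal power series over `ℝ`. -/
noncomputable def Aps (p : ℝ) : PowerSeries ℝ :=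
  PowerSeries.mk fun n => (1 - p) ^ (n.choose 2)

/-- `B_p(x) = Σ_{n≥0} (1-p)^{C(n+1,2)} x^n` as a formal power series over `ℝ`. -/
noncomputable def Bps (p : ℝ) : PowerSeries ℝ :=
  PowerSeries.mk fun n => (1 - p) ^ ((n + 1).choose 2)

open Finset PowerSeries

lemma one_sub_X_mul_mk_one : ((1 : PowerSeries ℝ) - X) * PowerSeries.mk (fun _ => (1:ℝ)) = 1 := by
  ext n
  rw [sub_mul, one_mul, map_sub]
  cases n with
  | zero => simp
  | succ m => simp [coeff_succ_X_mul, PowerSeries.coeff_one]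

lemma inv_one_sub_X : ((1 : PowerSeries ℝ) - X)⁻¹ = PowerSeries.mk (fun _ => (1:ℝ)) := by
  rw [PowerSeries.inv_eq_iff_mul_eq_one (by simp)]
  rw [mul_comm]; exact one_sub_X_mul_mk_one

lemma aps_eq (p : ℝ) : Aps p = 1 + X * Bps p := by
  ext n
  cases n with
  | zero => simp [Aps, Bps]
  | succ m =>
    rw [map_add, coeff_succ_X_mul]
    simp [Aps, Bps, PowerSeries.coeff_one]

/-- if `g` satisfies the stated recurrence, then its generating function
`G` satisfies `(G-1)(1 - A_p + B_p) = x/(1-x)` and `G = 1 + x/((1-x)² B_p)`. -/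
theorem stmt6 (p : ℝ) (hp : p ∈ Set.Ioo (0 : ℝ) 1) (g : ℕ → ℝ)
    (hg0 : g 0 = 1) (hg1 : g 1 = 1)
    (hrec : ∀ n : ℕ, 2 ≤ n →
      g n = 1 + ∑ i ∈ Finset.Icc 1 (n - 1),
        ((1 - p) ^ (i.choose 2) - (1 - p) ^ ((i + 1).choose 2)) * g (n - i)) :
    (PowerSeries.mk g - 1) * (1 - Aps p + Bps p) =
        PowerSeries.X * (1 - PowerSeries.X)⁻¹ ∧
      PowerSeries.mk g = 1 + PowerSeries.X * ((1 - PowerSeries.X) ^ 2 * Bps p)⁻¹ := by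
  set d : ℕ → ℝ := fun i => (1 - p) ^ (i.choose 2) - (1 - p) ^ ((i + 1).choose 2) with hd
  have hd0 : d 0 = 0 := by simp [hd]
  -- the convolution sum evaluates nicely
  have key : ∀ n : ℕ, 1 ≤ n → ∑ k ∈ range (n + 1), g k * d (n - k) = g n + d n - 1 := by
    intro n hn
    rcases n with _ | _ | l
    · omega
    · -- n = 1
      simp [Finset.sum_range_succ, hg0, hg1, hd0]
    · -- n = l + 2
      show ∑ k ∈ range (l + 2 + 1), g k * d (l + 2 - k) = g (l + 2) + d (l + 2) - 1
      rw [Finset.sum_range_succ, Nat.sub_self, hd0, mul_zero, add_zero,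
        Finset.sum_range_succ', Nat.sub_zero, hg0, one_mul]
      have hmid : ∑ k ∈ range (l + 1), g (k + 1) * d (l + 2 - (k + 1))
          = ∑ i ∈ Finset.Icc 1 (l + 1), d i * g (l + 2 - i) := by
        have hIcc : Finset.Icc 1 (l + 1) = Finset.Ico 1 (l + 2) := by
          rw [← Finset.Ico_add_one_right_eq_Icc]; rfl
        rw [hIcc, Finset.sum_Ico_eq_sum_range,
          show l + 2 - 1 = l + 1 from rfl,
          ← Finset.sum_range_reflect (fun k => g (k + 1) * d (l + 2 - (k + 1))) (l + 1)]
        apply Finset.sum_congr rfl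
        intro k hk
        simp only [Finset.mem_range] at hk
        have e1 : l + 1 - 1 - k + 1 = l + 1 - k := by omega
        rw [e1]
        have e2 : l + 2 - (l + 1 - k) = k + 1 := by omega
        have e3 : 1 + k = k + 1 := by omega
        have e4 : l + 2 - (k + 1) = l + 1 - k := by omega
        rw [e2, e3, e4, mul_comm]
      rw [hmid]
      have hr' : g (l + 2) = 1 + ∑ i ∈ Finset.Icc 1 (l + 1), d i * g (l + 2 - i) := by
        have := hrec (l + 2) (by omega)
        simpa [hd] using this
      rw [hr']; ring
  -- first identity
  have hAmB : Aps p - Bps p = PowerSeries.mk d := by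
    ext n; simp [Aps, Bps, hd]
  have h1 : (PowerSeries.mk g - 1) * (1 - Aps p + Bps p) = X * (1 - X)⁻¹ := by
    have hre : (1 : PowerSeries ℝ) - Aps p + Bps p = 1 - PowerSeries.mk d := by
      rw [← hAmB]; ring
    rw [hre, inv_one_sub_X]
    ext n
    rw [sub_mul, mul_sub, one_mul, mul_one]
    cases n with
    | zero =>
      simp [PowerSeries.coeff_mul, PowerSeries.coeff_one, hg0, hd0]
    | succ m =>
      rw [coeff_succ_X_mul, map_sub, map_sub, map_sub]
      simp only [PowerSeries.coeff_mk, PowerSeries.coeff_one, Nat.succ_ne_zero, if_false,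
        sub_zero]
      have hcm : (PowerSeries.coeff (m + 1)) (PowerSeries.mk g * PowerSeries.mk d)
          = ∑ k ∈ range (m + 1 + 1), g k * d (m + 1 - k) := by
        rw [PowerSeries.coeff_mul, Finset.Nat.sum_antidiagonal_eq_sum_range_succ_mk]
        simp
      rw [hcm, key (m + 1) (by omega)]
      ring
  refine ⟨h1, ?_⟩
  -- second identity
  have hU0 : PowerSeries.constantCoeff (((1 : PowerSeries ℝ) - X) ^ 2 * Bps p) ≠ 0 := by
    simp [Bps]
  have hfac : (1 : PowerSeries ℝ) - Aps p + Bps p = (1 - X) * Bps p := by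
    rw [aps_eq p]; ring
  have h2 : (PowerSeries.mk g - 1) * (((1 : PowerSeries ℝ) - X) ^ 2 * Bps p) = X := by
    have h10 : PowerSeries.constantCoeff ((1 : PowerSeries ℝ) - X) ≠ 0 := by simp
    have hstep := congrArg (· * ((1 : PowerSeries ℝ) - X)) h1
    simp only [hfac] at hstep
    calc (PowerSeries.mk g - 1) * (((1 : PowerSeries ℝ) - X) ^ 2 * Bps p)
        = (PowerSeries.mk g - 1) * ((1 - X) * Bps p) * (1 - X) := by ring
      _ = X * (1 - X)⁻¹ * (1 - X) := hstep
      _ = X * ((1 - X)⁻¹ * (1 - X)) := by ring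
      _ = X := by rw [PowerSeries.inv_mul_cancel _ h10, mul_one]
  have h3 : PowerSeries.mk g - 1 = X * (((1 : PowerSeries ℝ) - X) ^ 2 * Bps p)⁻¹ := by
    have h4 : (PowerSeries.mk g - 1) * (((1 : PowerSeries ℝ) - X) ^ 2 * Bps p *
        (((1 : PowerSeries ℝ) - X) ^ 2 * Bps p)⁻¹) = X * (((1 : PowerSeries ℝ) - X) ^ 2 * Bps p)⁻¹ := by
      rw [← mul_assoc, h2]
    rwa [PowerSeries.mul_inv_cancel _ hU0, mul_one] at h4
  linear_combination h3
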